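/- Let A = F·P. If x ∈ ℂ^N satisfies ‖A·x − c‖ = ‖A·(Aᴴ·c) − c‖ for some c ∈ ℂ^M, then x = Aᴴ·c; i.e., the minimizer of the least-squares objective ‖A·x − c‖ is unique and equals Aᴴ·c. -/

import Mathlib

open Matrix Finset

/-- The Euclidean ℓ²-norm of a vector in ℂ^M. -/
noncomputable def euclNorm {M : ℕ} (v : Fin M → ℂ) : ℝ :=
  Real.sqrt (∑ m, ‖v m‖ ^ 2)

lemma euclNorm_sq_eq {M : ℕ} (v : Fin M → ℂ) :
    (∑ m, ‖v m‖ ^ 2) = (v ⬝ᵥ star v).re := by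
  simp only [dotProduct, Complex.mul_conj, Complex.re_sum]
  refine Finset.sum_congr rfl fun m _ => ?_
  rw [Pi.star_apply, show star (v m) = (starRingEnd ℂ) (v m) from rfl, Complex.mul_conj,
    Complex.ofReal_re, ← Complex.sq_norm]

/-- **The least-squares minimizer is unique and equals Aᴴ·c for A = F·P.** -/
theorem least_squares_minimizer_unique
    (M N : ℕ) (hM : 0 < M) (hN : 0 < N)
    (F : Matrix (Fin M) (Fin M) ℂ) (hF : Fᴴ * F = 1)
    (emb : Fin N → Fin M) (hemb : Function.Injective emb)
    (P : Matrix (Fin M) (Fin N) ℂ)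
    (hP : ∀ i j, P i j = if i = emb j then 1 else 0)
    (A : Matrix (Fin M) (Fin N) ℂ) (hA : A = F * P)
    (c : Fin M → ℂ) (x : Fin N → ℂ)
    (hx : euclNorm (A *ᵥ x - c) = euclNorm (A *ᵥ (Aᴴ *ᵥ c) - c)) :
    x = Aᴴ *ᵥ c := by
  -- P has orthonormal columns
  have hPP : Pᴴ * P = 1 := by
    ext j k
    simp only [Matrix.mul_apply, Matrix.conjTranspose_apply, hP]
    by_cases h : j = k
    · subst h
      simp [Finset.sum_ite_eq' Finset.univ (emb j)]
    · have : emb j ≠ emb k := fun he => h (hemb he)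
      rw [Finset.sum_eq_zero, Matrix.one_apply_ne h]
      intro i _
      by_cases h1 : i = emb j <;> by_cases h2 : i = emb k <;>
        simp_all
  have hAtA : Aᴴ * A = 1 := by
    rw [hA, Matrix.conjTranspose_mul, Matrix.mul_assoc, ← Matrix.mul_assoc Fᴴ, hF,
      Matrix.one_mul, hPP]
  set x₀ : Fin N → ℂ := Aᴴ *ᵥ c with hx₀
  set r : Fin M → ℂ := A *ᵥ x₀ - c with hrdef
  set y : Fin N → ℂ := x - x₀ with hydef
  have hr : Aᴴ *ᵥ r = 0 := by
    rw [hrdef, Matrix.mulVec_sub, Matrix.mulVec_mulVec, hAtA, Matrix.one_mulVec, hx₀,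
      sub_self]
  have hdecomp : A *ᵥ x - c = A *ᵥ y + r := by
    rw [hydef, hrdef, Matrix.mulVec_sub]
    abel
  -- orthogonality
  have horth : (A *ᵥ y) ⬝ᵥ star r = 0 := by
    rw [dotProduct_comm, Matrix.dotProduct_mulVec]
    have : star r ᵥ* A = star (Aᴴ *ᵥ r) := by
      rw [Matrix.star_mulVec, Matrix.conjTranspose_conjTranspose]
    rw [this, hr]
    simp
  have horth' : r ⬝ᵥ star (A *ᵥ y) = 0 := by
    have h' : r ⬝ᵥ star (A *ᵥ y) = star ((A *ᵥ y) ⬝ᵥ star r) := by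
      simp [dotProduct, mul_comm]
    rw [h', horth, star_zero]
  have hAy : (A *ᵥ y) ⬝ᵥ star (A *ᵥ y) = y ⬝ᵥ star y := by
    rw [dotProduct_comm, Matrix.dotProduct_mulVec]
    have : star (A *ᵥ y) ᵥ* A = star y := by
      rw [Matrix.star_mulVec, Matrix.vecMul_vecMul, hAtA, Matrix.vecMul_one]
    rw [this, dotProduct_comm]
  -- sum of squares equality
  have hsq : (∑ m, ‖(A *ᵥ x - c) m‖ ^ 2) = (∑ m, ‖r m‖ ^ 2) := by
    have h1 : (0:ℝ) ≤ ∑ m, ‖(A *ᵥ x - c) m‖ ^ 2 :=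
      Finset.sum_nonneg fun _ _ => sq_nonneg _
    have h2 : (0:ℝ) ≤ ∑ m, ‖r m‖ ^ 2 :=
      Finset.sum_nonneg fun _ _ => sq_nonneg _
    have := hx
    unfold euclNorm at this
    rwa [Real.sqrt_inj h1 h2] at this
  -- expand using hdecomp and orthogonality
  have hexp : ((A *ᵥ x - c) ⬝ᵥ star (A *ᵥ x - c)) =
      y ⬝ᵥ star y + r ⬝ᵥ star r := by
    rw [hdecomp, star_add, add_dotProduct, dotProduct_add,
      dotProduct_add, horth, horth', hAy]
    ring
  have hy0 : (∑ j, ‖y j‖ ^ 2) = 0 := by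
    have e1 := euclNorm_sq_eq (A *ᵥ x - c)
    have e2 := euclNorm_sq_eq r
    have e3 := euclNorm_sq_eq y
    have : (∑ m, ‖(A *ᵥ x - c) m‖ ^ 2) = (∑ j, ‖y j‖ ^ 2) + (∑ m, ‖r m‖ ^ 2) := by
      rw [e1, e2, e3, hexp, Complex.add_re]
    linarith [hsq, this]
  have hyz : y = 0 := by
    funext j
    have hj : ‖y j‖ ^ 2 = 0 := by
      have := (Finset.sum_eq_zero_iff_of_nonneg
        (fun i _ => sq_nonneg ‖y i‖)).mp hy0 j (Finset.mem_univ j)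
      exact this
    have : ‖y j‖ = 0 := by nlinarith [norm_nonneg (y j)]
    simpa using this
  have : x - x₀ = 0 := hyz
  have := sub_eq_zero.mp this
  simpa [hx₀] using this
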